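/- Let K be a field and let t, x be nonzero elements of K satisfying Σ_{i=0}^{m+n−1} t^{k_i} x^i = 0. Define the row vector v = [e_1, …, e_{n−1}, f, g_1, …, g_{m−1}] of length m+n−1 by e_i = t^{σ(i)m−i}·x^{u_{σ(i)}} (1 ≤ i ≤ n−1), f = x·e_{n−m}, and g_i = t^{−n}·x^{−1}·e_i (1 ≤ i ≤ m−1). Then v·M(m,n) = x^{−1}·v, where the entries of M(m,n) are evaluated at t. -/

import Mathlib

open Finset

lemma aux_count (a b N : ℕ) (ha : 0 < a) (hb : 0 < b) (hab : Nat.Coprime a b)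
    (hdvd : a ∣ N) (h0 : 0 < N) (hN : N < a * b) :
    ((Finset.range N).filter (fun y => a ∣ y ∨ b ∣ y)).card = N / a + N / b := by
  have hbN : ¬ b ∣ N := by
    intro hbd
    have : a * b ∣ N := hab.mul_dvd_of_dvd_of_dvd hdvd hbd
    exact absurd (Nat.le_of_dvd h0 this) (by omega)
  have hA : (Finset.range N).filter (a ∣ ·) = (Finset.range (N / a)).image (· * a) := by
    ext y
    simp only [mem_filter, mem_range, mem_image]
    constructor
    · rintro ⟨hy, c, rfl⟩
      exact ⟨c, by
        have := Nat.div_lt_div_of_lt_of_dvd hdvd hy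
        simpa [Nat.mul_div_cancel_left _ ha, mul_comm] using this, by ring⟩
    · rintro ⟨c, hc, rfl⟩
      constructor
      · calc c * a < N / a * a := (Nat.mul_lt_mul_right ha).mpr hc
          _ ≤ N := Nat.div_mul_le_self N a
      · exact ⟨c, by ring⟩
  have hB : (Finset.range N).filter (b ∣ ·) = (Finset.range (N / b + 1)).image (· * b) := by
    ext y
    simp only [mem_filter, mem_range, mem_image]
    constructor
    · rintro ⟨hy, c, rfl⟩
      refine ⟨c, ?_, by ring⟩
      have : b * c / b ≤ N / b := Nat.div_le_div_right (le_of_lt hy)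
      rw [Nat.mul_div_cancel_left _ hb] at this; omega
    · rintro ⟨c, hc, rfl⟩
      refine ⟨?_, ⟨c, by ring⟩⟩
      have h1 : c * b ≤ N / b * b := Nat.mul_le_mul_right b (by omega)
      have h2 : N / b * b ≤ N := Nat.div_mul_le_self N b
      have h3 : c * b ≠ N := by rintro rfl; exact hbN ⟨c, by ring⟩
      omega
  have hAB : (Finset.range N).filter (a ∣ ·) ∩ (Finset.range N).filter (b ∣ ·) = {0} := by
    ext y
    simp only [mem_inter, mem_filter, mem_range, mem_singleton]
    constructor
    · rintro ⟨⟨hy, hay⟩, -, hby⟩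
      have : a * b ∣ y := hab.mul_dvd_of_dvd_of_dvd hay hby
      rcases Nat.eq_zero_or_pos y with h | h
      · exact h
      · exact absurd (Nat.le_of_dvd h this) (by omega)
    · rintro rfl; exact ⟨⟨h0, dvd_zero a⟩, h0, dvd_zero b⟩
  have cardA : ((Finset.range N).filter (a ∣ ·)).card = N / a := by
    rw [hA, Finset.card_image_of_injective _ (fun x y h => Nat.eq_of_mul_eq_mul_right ha h),
      Finset.card_range]
  have cardB : ((Finset.range N).filter (b ∣ ·)).card = N / b + 1 := by
    rw [hB, Finset.card_image_of_injective _ (fun x y h => Nat.eq_of_mul_eq_mul_right hb h),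
      Finset.card_range]
  have := Finset.card_union_add_card_inter ((Finset.range N).filter (a ∣ ·))
    ((Finset.range N).filter (b ∣ ·))
  rw [← Finset.filter_or, hAB, cardA, cardB] at this
  simp only [Finset.card_singleton] at this
  omega

lemma aux_index (m n : ℕ) (k : ℕ → ℕ)
    (hmono : ∀ i j : ℕ, i < j → j < m + n → k i < k j)
    (hmem : ∀ x : ℕ, ((m ∣ x ∨ n ∣ x) ∧ x ≤ m * n) ↔ ∃ i < m + n, k i = x)
    (l : ℕ) (hl : l < m + n) :
    ((Finset.range (k l)).filter (fun y => m ∣ y ∨ n ∣ y)).card = l := by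
  have hkl : (m ∣ k l ∨ n ∣ k l) ∧ k l ≤ m * n := (hmem (k l)).mpr ⟨l, hl, rfl⟩
  have himg : (Finset.range (k l)).filter (fun y => m ∣ y ∨ n ∣ y)
      = (Finset.range l).image k := by
    ext y
    simp only [mem_filter, mem_range, mem_image]
    constructor
    · rintro ⟨hy, hdvd⟩
      obtain ⟨j, hj, rfl⟩ := (hmem y).mp ⟨hdvd, by omega⟩
      refine ⟨j, ?_, rfl⟩
      by_contra h
      rcases Nat.lt_or_ge j l with h' | h'
      · exact h h'
      · rcases Nat.eq_or_lt_of_le h' with rfl | h''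
        · omega
        · exact absurd (hmono l j h'' hj) (by omega)
    · rintro ⟨j, hj, rfl⟩
      exact ⟨hmono j l hj hl, ((hmem (k j)).mpr ⟨j, by omega, rfl⟩).1⟩
  rw [himg, Finset.card_image_of_injOn, Finset.card_range]
  intro i hi j hj hij
  simp only [Finset.coe_range, Set.mem_Iio] at hi hj
  by_contra h
  rcases Nat.lt_or_ge i j with h' | h'
  · exact absurd (hmono i j h' (by omega)) (by omega)
  · exact absurd (hmono j i (by omega) (by omega)) (by omega)
lemma aux_ksi (m n : ℕ) (hm : 2 ≤ m) (hmn : m < n) (hcop : Nat.Coprime m n)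
    (k : ℕ → ℕ)
    (hmono : ∀ i j : ℕ, i < j → j < m + n → k i < k j)
    (hmem : ∀ x : ℕ, ((m ∣ x ∨ n ∣ x) ∧ x ≤ m * n) ↔ ∃ i < m + n, k i = x)
    (K : Type*) [Field K] (t x : K)
    (hroot : ∑ i ∈ Finset.range (m + n), t ^ (k i) * x ^ i = 0) :
    1 + t ^ (m * n) * x ^ (m + n - 1)
      + (∑ j ∈ Finset.Ico 1 n, t ^ (j * m) * x ^ (j + j * m / n))
      + (∑ c ∈ Finset.Ico 1 m, t ^ (c * n) * x ^ (c + c * n / m)) = 0 := by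
  classical
  set cnt : ℕ → ℕ := fun y => ((Finset.range y).filter (fun z => m ∣ z ∨ n ∣ z)).card with hcnt
  set g : ℕ → K := fun y => t ^ y * x ^ (cnt y) with hg
  have hm0 : 0 < m := by omega
  have hn0 : 0 < n := by omega
  have kinj : ∀ p ∈ Finset.range (m + n), ∀ q ∈ Finset.range (m + n), k p = k q → p = q := by
    intro p hp q hq hpq
    simp only [mem_range] at hp hq
    by_contra h
    rcases Nat.lt_or_ge p q with h' | h'
    · exact absurd (hmono p q h' hq) (by omega)
    · exact absurd (hmono q p (by omega) hp) (by omega)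
  have hF : ∑ y ∈ (Finset.range (m + n)).image k, g y = 0 := by
    rw [Finset.sum_image kinj]
    rw [← hroot]
    apply Finset.sum_congr rfl
    intro i hi
    simp only [mem_range] at hi
    simp only [hg, hcnt]
    rw [aux_index m n k hmono hmem i hi]
  have hFeq : (Finset.range (m + n)).image k
      = (Finset.range (n + 1)).image (· * m) ∪ (Finset.range (m + 1)).image (· * n) := by
    ext y
    simp only [mem_image, mem_union, mem_range]
    constructor
    · rintro ⟨i, hi, rfl⟩
      have h := (hmem (k i)).mpr ⟨i, hi, rfl⟩
      rcases h.1 with ⟨c, hc⟩ | ⟨c, hc⟩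
      · left
        refine ⟨c, ?_, by rw [hc]; ring⟩
        have h1 : m * c ≤ m * n := by omega
        have := Nat.le_of_mul_le_mul_left h1 hm0
        omega
      · right
        refine ⟨c, ?_, by rw [hc]; ring⟩
        have h1 : n * c ≤ n * m := by rw [mul_comm n m]; omega
        have := Nat.le_of_mul_le_mul_left h1 hn0
        omega
    · rintro (⟨c, hc, rfl⟩ | ⟨c, hc, rfl⟩)
      · refine (hmem (c * m)).mp ⟨Or.inl ⟨c, by ring⟩, ?_⟩
        have h1 : c * m ≤ n * m := Nat.mul_le_mul_right m (by omega)
        have h2 : n * m = m * n := mul_comm n m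
        omega
      · refine (hmem (c * n)).mp ⟨Or.inr ⟨c, by ring⟩, ?_⟩
        exact Nat.mul_le_mul_right n (by omega)
  have hInter : (Finset.range (n + 1)).image (· * m) ∩ (Finset.range (m + 1)).image (· * n)
      = {0, m * n} := by
    ext y
    simp only [mem_inter, mem_image, mem_range, mem_insert, mem_singleton]
    constructor
    · rintro ⟨⟨a, ha, rfl⟩, ⟨b, hb, hba⟩⟩
      have hdvd : m * n ∣ a * m := hcop.mul_dvd_of_dvd_of_dvd ⟨a, by ring⟩ ⟨b, by rw [← hba]; ring⟩
      rcases Nat.eq_zero_or_pos (a * m) with h | h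
      · left; exact h
      · right
        have h1 : m * n ≤ a * m := Nat.le_of_dvd h hdvd
        have h2 : a * m ≤ n * m := Nat.mul_le_mul_right m (by omega)
        have h3 : n * m = m * n := mul_comm n m
        omega
    · rintro (rfl | rfl)
      · exact ⟨⟨0, by omega, by ring⟩, ⟨0, by omega, by ring⟩⟩
      · exact ⟨⟨n, by omega, by ring⟩, ⟨m, by omega, by ring⟩⟩
  have hsum_m : ∑ y ∈ (Finset.range (n + 1)).image (· * m), g y
      = ∑ j ∈ Finset.range (n + 1), g (j * m) :=
    Finset.sum_image (fun p _ q _ h => Nat.eq_of_mul_eq_mul_right hm0 h)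
  have hsum_n : ∑ y ∈ (Finset.range (m + 1)).image (· * n), g y
      = ∑ c ∈ Finset.range (m + 1), g (c * n) :=
    Finset.sum_image (fun p _ q _ h => Nat.eq_of_mul_eq_mul_right hn0 h)
  have hsum_inter : ∑ y ∈ ({0, m * n} : Finset ℕ), g y = g 0 + g (m * n) :=
    Finset.sum_pair (Nat.mul_pos hm0 hn0).ne
  -- values of g
  have hg0 : g 0 = 1 := by simp [hg, hcnt]
  have hgmn : g (m * n) = t ^ (m * n) * x ^ (m + n - 1) := by
    obtain ⟨i, hi, hik⟩ := (hmem (m * n)).mp ⟨Or.inl ⟨n, rfl⟩, le_refl _⟩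
    have hi' : i = m + n - 1 := by
      by_contra h
      have hlt : i < m + n - 1 := by omega
      have := hmono i (m + n - 1) hlt (by omega)
      rw [hik] at this
      have h2 := (hmem (k (m + n - 1))).mpr ⟨m + n - 1, by omega, rfl⟩
      omega
    subst hi'
    have := aux_index m n k hmono hmem (m + n - 1) (by omega)
    rw [hik] at this
    simp only [hg, hcnt, this]
  have hgjm : ∀ j ∈ Finset.Ico 1 n, g (j * m) = t ^ (j * m) * x ^ (j + j * m / n) := by
    intro j hj
    simp only [mem_Ico] at hj
    have hcard := aux_count m n (j * m) hm0 hn0 hcop ⟨j, mul_comm j m⟩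
      (Nat.mul_pos (by omega) hm0)
      (by rw [mul_comm m n]; exact (Nat.mul_lt_mul_right hm0).mpr (by omega))
    simp only [hg, hcnt, hcard, Nat.mul_div_cancel _ hm0]
  have hgcn : ∀ c ∈ Finset.Ico 1 m, g (c * n) = t ^ (c * n) * x ^ (c + c * n / m) := by
    intro c hc
    simp only [mem_Ico] at hc
    have hcard := aux_count n m (c * n) hn0 hm0 hcop.symm ⟨c, mul_comm c n⟩
      (Nat.mul_pos (by omega) hn0)
      (by rw [mul_comm n m]; exact (Nat.mul_lt_mul_right hn0).mpr (by omega))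
    have hswap : ((Finset.range (c * n)).filter (fun z => m ∣ z ∨ n ∣ z)).card
        = ((Finset.range (c * n)).filter (fun z => n ∣ z ∨ m ∣ z)).card := by
      congr 1
      apply Finset.filter_congr
      intro z _
      exact or_comm
    simp only [hg, hcnt]
    rw [hswap, hcard, Nat.mul_div_cancel _ hn0]
  -- split the range sums
  have hsplit_m : ∑ j ∈ Finset.range (n + 1), g (j * m)
      = g 0 + (∑ j ∈ Finset.Ico 1 n, g (j * m)) + g (n * m) := by
    rw [Finset.sum_range_succ, Finset.range_eq_Ico,
      Finset.sum_eq_sum_Ico_succ_bot hn0]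
    simp
  have hsplit_n : ∑ c ∈ Finset.range (m + 1), g (c * n)
      = g 0 + (∑ c ∈ Finset.Ico 1 m, g (c * n)) + g (m * n) := by
    rw [Finset.sum_range_succ, Finset.range_eq_Ico,
      Finset.sum_eq_sum_Ico_succ_bot hm0]
    simp
  have hunion := Finset.sum_union_inter (s₁ := (Finset.range (n + 1)).image (· * m))
    (s₂ := (Finset.range (m + 1)).image (· * n)) (f := g)
  rw [← hFeq, hInter, hF, hsum_inter, hsum_m, hsum_n, hsplit_m, hsplit_n] at hunion
  rw [Finset.sum_congr rfl hgjm, Finset.sum_congr rfl hgcn] at hunion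
  have hcomm : g (n * m) = g (m * n) := by rw [mul_comm]
  rw [hg0, hcomm, hgmn] at hunion
  linear_combination -hunion

set_option maxHeartbeats 2000000 in
/-- Let `k` be the increasing enumeration of `𝔉(m,n)`,
`u j` the index with `k (u j) = j*m`, and `σ i = [i*m̄]_n`.  Let `K` be a
field and `t, x ∈ K \ {0}` with `Σ_{i<m+n} t^{k i} x^i = 0`.  Let
`M(m,n)` be the `(m+n-1) × (m+n-1)` matrix (with `1`-based indices `I, J`):
row `I` (`1 ≤ I ≤ n-1`) has `-t^I` in column `m` and `1` in column `m+I`;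
row `n` has `-t^n` in column `m`; row `n+i` (`1 ≤ i ≤ m-1`) has `t^n` in
column `i` and `-t^n` in column `m`; all other entries vanish.  Let `v`
be the row vector `[e 1, …, e (n-1), x * e (n-m), t⁻¹^n * x⁻¹ * e 1, …,
t⁻¹^n * x⁻¹ * e (m-1)]` where `e i = t^(σ i * m - i) * x^(u (σ i))`.
Then `v * M(m,n) = x⁻¹ • v`. -/
theorem row_vector_eigen (m n : ℕ) (hm : 2 ≤ m) (hmn : m < n)
    (hcop : Nat.Coprime m n) (k : ℕ → ℕ)
    (hmono : ∀ i j : ℕ, i < j → j < m + n → k i < k j)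
    (hmem : ∀ x : ℕ, ((m ∣ x ∨ n ∣ x) ∧ x ≤ m * n) ↔ ∃ i < m + n, k i = x)
    (u : ℕ → ℕ)
    (hu : ∀ j ≤ n, u j < m + n ∧ k (u j) = j * m)
    (mbar : ℕ) (hmbar : m * mbar ≡ 1 [MOD n])
    (σ : ℕ → ℕ) (hσ : ∀ i, σ i = i * mbar % n)
    (K : Type*) [Field K] (t x : K) (ht : t ≠ 0) (hx : x ≠ 0)
    (hroot : ∑ i ∈ Finset.range (m + n), t ^ (k i) * x ^ i = 0)
    (e : ℕ → K) (he : ∀ i, e i = t ^ (σ i * m - i) * x ^ (u (σ i)))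
    (M : Matrix (Fin (m + n - 1)) (Fin (m + n - 1)) K)
    (hM : ∀ i j : Fin (m + n - 1), M i j =
      if i.val + 1 ≤ n - 1 then
        (if j.val + 1 = m then -t ^ (i.val + 1)
         else if j.val + 1 = m + (i.val + 1) then 1 else 0)
      else if i.val + 1 = n then
        (if j.val + 1 = m then -t ^ n else 0)
      else
        (if j.val + 1 = i.val + 1 - n then t ^ n
         else if j.val + 1 = m then -t ^ n else 0))
    (v : Fin (m + n - 1) → K)
    (hv : ∀ i : Fin (m + n - 1), v i =
      if i.val + 1 ≤ n - 1 then e (i.val + 1)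
      else if i.val + 1 = n then x * e (n - m)
      else t⁻¹ ^ n * x⁻¹ * e (i.val + 1 - n)) :
    Matrix.vecMul v M = x⁻¹ • v := by
  classical
  have hm0 : 0 < m := by omega
  have hn0 : 0 < n := by omega
  -- basic facts about σ
  have hσlt : ∀ i, σ i < n := fun i => by rw [hσ]; exact Nat.mod_lt _ hn0
  have hσmod : ∀ i, m * σ i ≡ i [MOD n] := by
    intro i
    rw [hσ]
    calc m * (i * mbar % n) ≡ m * (i * mbar) [MOD n] := Nat.ModEq.mul_left m (Nat.mod_modEq _ n)
      _ = m * mbar * i := by ring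
      _ ≡ 1 * i [MOD n] := Nat.ModEq.mul_right i hmbar
      _ = i := one_mul i
  have hσne : ∀ i, 1 ≤ i → i < n → 1 ≤ σ i := by
    intro i h1 h2
    by_contra h
    have h0 : σ i = 0 := by omega
    have h3 := hσmod i
    rw [h0, mul_zero] at h3
    have h4 : 0 % n = i % n := h3
    rw [Nat.zero_mod, Nat.mod_eq_of_lt h2] at h4
    omega
  have hσmodval : ∀ i, i < n → σ i * m % n = i := by
    intro i h
    have h3 : m * σ i % n = i % n := hσmod i
    rw [Nat.mod_eq_of_lt h] at h3
    rw [mul_comm]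
    exact h3
  have hσdiv : ∀ i, i < n → σ i * m = σ i * m / n * n + i := by
    intro i h
    have h1 := Nat.div_add_mod (σ i * m) n
    rw [hσmodval i h] at h1
    have h2 : n * (σ i * m / n) = σ i * m / n * n := mul_comm _ _
    omega
  have hσval : ∀ i j, i < n → j < n → i ≡ j * m [MOD n] → σ i = j := by
    intro i j hi hj hij
    have h1 : m * σ i ≡ m * j [MOD n] := by
      calc m * σ i ≡ i [MOD n] := hσmod i
        _ ≡ j * m [MOD n] := hij
        _ = m * j := mul_comm j m
    have h2 : σ i % n = j % n := Nat.ModEq.cancel_left_of_coprime hcop.symm h1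
    rw [Nat.mod_eq_of_lt (hσlt i), Nat.mod_eq_of_lt hj] at h2
    exact h2
  -- formula for u
  have huf : ∀ j, 1 ≤ j → j < n → u j = j + j * m / n := by
    intro j h1 h2
    obtain ⟨hu1, hu2⟩ := hu j (by omega)
    have h3 := aux_index m n k hmono hmem (u j) hu1
    rw [hu2] at h3
    have hc := aux_count m n (j * m) hm0 hn0 hcop ⟨j, mul_comm j m⟩
      (Nat.mul_pos (by omega) hm0)
      (by rw [mul_comm m n]; exact (Nat.mul_lt_mul_right hm0).mpr (by omega))
    rw [hc, Nat.mul_div_cancel _ hm0] at h3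
    omega
  -- normal form for e
  have hef : ∀ i, 1 ≤ i → i < n → e i = t ^ (σ i * m / n * n) * x ^ (σ i + σ i * m / n) := by
    intro i h1 h2
    rw [he, huf (σ i) (hσne i h1 h2) (hσlt i)]
    have h3 := hσdiv i h2
    congr 2
    omega
  -- successor property for σ
  have hσsucc : ∀ i i', 1 ≤ i → i < n → 1 ≤ i' → i' < n → i' ≡ i + m [MOD n] →
      σ i' = σ i + 1 := by
    intro i i' h1 h2 h1' h2' hcong
    have key : m * σ i' ≡ m * (σ i + 1) [MOD n] := by
      calc m * σ i' ≡ i' [MOD n] := hσmod i'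
        _ ≡ i + m [MOD n] := hcong
        _ ≡ m * σ i + m [MOD n] := Nat.ModEq.add_right m (hσmod i).symm
        _ = m * (σ i + 1) := by ring
    have h3 : σ i' % n = (σ i + 1) % n := Nat.ModEq.cancel_left_of_coprime hcop.symm key
    have h4 := hσlt i'
    have h5 := hσlt i
    have h6 := hσne i' h1' h2'
    rcases Nat.lt_or_ge (σ i + 1) n with h7 | h7
    · rw [Nat.mod_eq_of_lt h4, Nat.mod_eq_of_lt h7] at h3
      exact h3
    · have h8 : σ i + 1 = n := by omega
      rw [Nat.mod_eq_of_lt h4, h8, Nat.mod_self] at h3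
      omega
  -- claim 1
  have hclaim1 : ∀ i, 1 ≤ i → i + m < n → e (i + m) = x * e i := by
    intro i h1 h2
    have hs := hσsucc i (i + m) h1 (by omega) (by omega) (by omega) (Nat.ModEq.refl _)
    have hdq := hσdiv i (by omega)
    have hexp : (σ i + 1) * m = σ i * m + m := by ring
    have hq' : (σ i + 1) * m = σ i * m / n * n + (i + m) := by omega
    have hdivq : (σ i + 1) * m / n = σ i * m / n := by
      rw [hq', add_comm, Nat.add_mul_div_right _ _ hn0, Nat.div_eq_of_lt h2, zero_add]
    rw [hef (i + m) (by omega) (by omega), hef i h1 (by omega), hs, hdivq]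
    ring
  -- claim 2
  have hclaim2 : ∀ i, n - m < i → i < n → e (i + m - n) = t ^ n * x ^ 2 * e i := by
    intro i h1 h2
    have hi'1 : 1 ≤ i + m - n := by omega
    have hi'2 : i + m - n < n := by omega
    have hs := hσsucc i (i + m - n) (by omega) h2 hi'1 hi'2 (by
      show (i + m - n) % n = (i + m) % n
      obtain ⟨w, hw⟩ : ∃ w, w = i + m - n := ⟨_, rfl⟩
      rw [← hw]
      have h3 : i + m = n + w := by omega
      rw [h3, Nat.add_mod_left])
    have hdq := hσdiv i h2
    have hexp : (σ i + 1) * m = σ i * m + m := by ring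
    have hexp2 : (σ i * m / n + 1) * n = σ i * m / n * n + n := by ring
    have hq' : (σ i + 1) * m = (σ i * m / n + 1) * n + (i + m - n) := by omega
    have hdivq : (σ i + 1) * m / n = σ i * m / n + 1 := by
      rw [hq', add_comm, Nat.add_mul_div_right _ _ hn0, Nat.div_eq_of_lt hi'2, zero_add]
    rw [hef (i + m - n) hi'1 hi'2, hef i (by omega) h2, hs, hdivq]
    ring
  -- special values
  have hσm : σ m = 1 := by
    rw [hσ]
    have h1 : m * mbar % n = 1 % n := hmbar
    rwa [Nat.mod_eq_of_lt (show 1 < n by omega)] at h1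
  have hem : e m = x := by
    rw [hef m (by omega) hmn, hσm, one_mul, Nat.div_eq_of_lt hmn]
    norm_num
  have e2mn : (m - 1) * n + n = m * n := by
    calc (m - 1) * n + n = (m - 1 + 1) * n := by ring
      _ = m * n := by congr 1; omega
  have e2nm : (n - 1) * m + m = n * m := by
    calc (n - 1) * m + m = (n - 1 + 1) * m := by ring
      _ = n * m := by congr 1; omega
  have e3 : m * n = n * m := mul_comm m n
  have hnm1 : (n - 1) * m = (n - m) + (m - 1) * n := by omega
  have hσnm : σ (n - m) = n - 1 := by
    apply hσval (n - m) (n - 1) (by omega) (by omega)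
    show (n - m) % n = (n - 1) * m % n
    rw [hnm1, Nat.add_mul_mod_self_right]
  have hnm1div : (n - 1) * m / n = m - 1 := by
    rw [hnm1, Nat.add_mul_div_right _ _ hn0, Nat.div_eq_of_lt (by omega), zero_add]
  have henm : t ^ n * (x * e (n - m)) = t ^ (m * n) * x ^ (m + n - 1) := by
    rw [hef (n - m) (by omega) (by omega), hσnm, hnm1div]
    rw [show m * n = n + (m - 1) * n from by omega,
        show m + n - 1 = (n - 1 + (m - 1)) + 1 from by omega]
    ring
  -- the two reindexed sums
  have hsum1 : ∑ i ∈ Finset.Ico 1 n, t ^ i * e i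
      = ∑ j ∈ Finset.Ico 1 n, t ^ (j * m) * x ^ (j + j * m / n) := by
    apply Finset.sum_nbij' σ (fun j => j * m % n)
    · intro a ha
      simp only [Finset.mem_Ico] at ha ⊢
      exact ⟨hσne a ha.1 ha.2, hσlt a⟩
    · intro a ha
      simp only [Finset.mem_Ico] at ha ⊢
      constructor
      · by_contra h
        have h0 : a * m % n = 0 := by omega
        have h1 : n ∣ a * m := Nat.dvd_of_mod_eq_zero h0
        have h2 : n ∣ a := Nat.Coprime.dvd_of_dvd_mul_right hcop.symm h1
        have := Nat.le_of_dvd (by omega) h2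
        omega
      · exact Nat.mod_lt _ hn0
    · intro a ha
      simp only [Finset.mem_Ico] at ha
      exact hσmodval a ha.2
    · intro a ha
      simp only [Finset.mem_Ico] at ha
      exact hσval (a * m % n) a (Nat.mod_lt _ hn0) ha.2 (Nat.mod_modEq _ n)
    · intro a ha
      simp only [Finset.mem_Ico] at ha
      rw [hef a ha.1 ha.2, ← mul_assoc, ← pow_add]
      have h3 := hσdiv a ha.2
      congr 2
      omega
  have hsum2 : ∑ i ∈ Finset.Ico 1 m, e i
      = x * ∑ c ∈ Finset.Ico 1 m, t ^ (c * n) * x ^ (c + c * n / m) := by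
    rw [Finset.mul_sum]
    apply Finset.sum_nbij' (fun i => σ i * m / n) (fun c => m - c * n % m)
    · intro a ha
      simp only [Finset.mem_Ico] at ha ⊢
      have h3 := hσdiv a (by omega)
      have h4 : 1 ≤ σ a := hσne a ha.1 (by omega)
      have h5 : m ≤ σ a * m := Nat.le_mul_of_pos_left m h4
      constructor
      · rcases Nat.eq_zero_or_pos (σ a * m / n) with h0 | h0
        · rw [h0, zero_mul, zero_add] at h3
          omega
        · exact h0
      · have h6 : σ a ≤ n - 1 := by have := hσlt a; omega
        have h7 : σ a * m ≤ (n - 1) * m := Nat.mul_le_mul_right m h6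
        by_contra h
        have h8 : m ≤ σ a * m / n := by omega
        have h9 : m * n ≤ σ a * m / n * n := Nat.mul_le_mul_right n h8
        omega
    · intro a ha
      simp only [Finset.mem_Ico] at ha ⊢
      have h1 : a * n % m < m := Nat.mod_lt _ hm0
      have h2 : a * n % m ≠ 0 := by
        intro h
        have h3 : m ∣ a * n := Nat.dvd_of_mod_eq_zero h
        have h4 : m ∣ a := hcop.dvd_of_dvd_mul_right h3
        have := Nat.le_of_dvd (by omega) h4
        omega
      omega
    · intro a ha
      simp only [Finset.mem_Ico] at ha
      have h3 := hσdiv a (by omega)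
      have h4 : 1 ≤ σ a := hσne a ha.1 (by omega)
      have e1 : (σ a - 1) * m + m = σ a * m := by
        calc (σ a - 1) * m + m = (σ a - 1 + 1) * m := by ring
          _ = σ a * m := by congr 1; omega
      have h5 : σ a * m / n * n = (m - a) + (σ a - 1) * m := by omega
      rw [h5, Nat.add_mul_mod_self_right, Nat.mod_eq_of_lt (by omega)]
      omega
    · intro a ha
      simp only [Finset.mem_Ico] at ha
      have hdm := Nat.div_add_mod (a * n) m
      have hr1 : a * n % m < m := Nat.mod_lt _ hm0
      have hr2 : a * n % m ≠ 0 := by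
        intro h
        have h3 : m ∣ a * n := Nat.dvd_of_mod_eq_zero h
        have h4 : m ∣ a := hcop.dvd_of_dvd_mul_right h3
        have := Nat.le_of_dvd (by omega) h4
        omega
      have hsm : (a * n / m + 1) * m = a * n + (m - a * n % m) := by
        have h5 : (a * n / m + 1) * m = m * (a * n / m) + m := by ring
        omega
      have hslt : a * n / m + 1 < n := by
        have h6 : a * n ≤ (m - 1) * n := Nat.mul_le_mul_right n (by omega)
        by_contra h
        have h7 : n - 1 ≤ a * n / m := by omega
        have h8 : (n - 1) * m ≤ a * n / m * m := Nat.mul_le_mul_right m h7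
        have h9 : a * n / m * m = m * (a * n / m) := mul_comm _ m
        omega
      have hσi0 : σ (m - a * n % m) = a * n / m + 1 := by
        apply hσval (m - a * n % m) (a * n / m + 1) (by omega) hslt
        show (m - a * n % m) % n = (a * n / m + 1) * m % n
        rw [hsm, add_comm (a * n) (m - a * n % m), Nat.add_mul_mod_self_right]
      rw [hσi0, hsm, add_comm (a * n) (m - a * n % m),
        Nat.add_mul_div_right _ _ hn0, Nat.div_eq_of_lt (by omega), zero_add]
    · intro a ha
      simp only [Finset.mem_Ico] at ha
      have h3 := hσdiv a (by omega)
      have h4 : 1 ≤ σ a := hσne a ha.1 (by omega)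
      have e1 : (σ a - 1) * m + m = σ a * m := by
        calc (σ a - 1) * m + m = (σ a - 1 + 1) * m := by ring
          _ = σ a * m := by congr 1; omega
      have h5 : σ a * m / n * n = (m - a) + (σ a - 1) * m := by omega
      have hqd : σ a * m / n * n / m = σ a - 1 := by
        rw [h5, Nat.add_mul_div_right _ _ hm0, Nat.div_eq_of_lt (by omega), zero_add]
      rw [hef a ha.1 (by omega), hqd,
        show σ a + σ a * m / n = (σ a * m / n + (σ a - 1)) + 1 from by omega,
        pow_add, pow_one]
      ring
  have hKSI := aux_ksi m n hm hmn hcop k hmono hmem K t x hroot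
  have htt : t⁻¹ ^ n * t ^ n = 1 := by
    rw [inv_pow]; exact inv_mul_cancel₀ (pow_ne_zero n ht)
  have hxx : x⁻¹ * x = 1 := inv_mul_cancel₀ hx
  -- now compute the matrix-vector product column by column
  funext j
  have hj2 := j.isLt
  simp only [Matrix.vecMul, dotProduct, Pi.smul_apply, smul_eq_mul]
  by_cases hA : j.val + 1 < m
  · -- columns 1..m-1
    rw [Finset.sum_eq_single_of_mem (⟨n + j.val, by omega⟩ : Fin (m + n - 1))
      (Finset.mem_univ _)]
    · rw [hM, hv, hv]
      simp only [Fin.val_mk]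
      split_ifs <;>
        first
          | omega
          | (rw [show n + j.val + 1 - n = j.val + 1 from by omega]
             linear_combination (x⁻¹ * e (j.val + 1)) * htt)
    · intro b _ hbne
      have hb2 := b.isLt
      have hbv : b.val ≠ n + j.val := by
        intro h
        exact hbne (Fin.ext (by simpa using h))
      rw [hM]
      split_ifs <;> first | rw [mul_zero] | omega
  · by_cases hC : j.val + 1 = m
    · -- column m
      have hterm : ∀ i : Fin (m + n - 1), v i * M i j =
          if i.val + 1 ≤ n - 1 then -(t ^ (i.val + 1) * e (i.val + 1))
          else if i.val + 1 = n then -(t ^ n * (x * e (n - m)))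
          else -(x⁻¹ * e (i.val + 1 - n)) := by
        intro i
        have hi2 := i.isLt
        rw [hM, hv]
        split_ifs <;>
          first
            | omega
            | ring1
            | (rw [inv_pow]; field_simp; try ring)
      have hsum0 : ∑ i : Fin (m + n - 1), v i * M i j
          = ∑ i0 ∈ Finset.range (m + n - 1),
            (if i0 + 1 ≤ n - 1 then -(t ^ (i0 + 1) * e (i0 + 1))
             else if i0 + 1 = n then -(t ^ n * (x * e (n - m)))
             else -(x⁻¹ * e (i0 + 1 - n))) := by
        rw [← Fin.sum_univ_eq_sum_range (fun i0 =>
          if i0 + 1 ≤ n - 1 then -(t ^ (i0 + 1) * e (i0 + 1))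
          else if i0 + 1 = n then -(t ^ n * (x * e (n - m)))
          else -(x⁻¹ * e (i0 + 1 - n))) (m + n - 1)]
        exact Finset.sum_congr rfl (fun i _ => hterm i)
      have hsing : Finset.Ico (n - 1) n = {n - 1} := by
        ext y; simp only [Finset.mem_Ico, Finset.mem_singleton]; omega
      have P1 : ∑ i0 ∈ Finset.Ico 0 (n - 1),
            (if i0 + 1 ≤ n - 1 then -(t ^ (i0 + 1) * e (i0 + 1))
             else if i0 + 1 = n then -(t ^ n * (x * e (n - m)))
             else -(x⁻¹ * e (i0 + 1 - n)))
          = -∑ i ∈ Finset.Ico 1 n, t ^ i * e i := by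
        rw [← Finset.sum_neg_distrib]
        apply Finset.sum_nbij' (fun i0 => i0 + 1) (fun i => i - 1)
        · intro a ha; simp only [Finset.mem_Ico] at ha ⊢; omega
        · intro a ha; simp only [Finset.mem_Ico] at ha ⊢; omega
        · intro a ha; simp only [Finset.mem_Ico] at ha; omega
        · intro a ha; simp only [Finset.mem_Ico] at ha; omega
        · intro a ha
          simp only [Finset.mem_Ico] at ha
          rw [if_pos (show a + 1 ≤ n - 1 from by omega)]
      have P3 : ∑ i0 ∈ Finset.Ico n (m + n - 1),
            (if i0 + 1 ≤ n - 1 then -(t ^ (i0 + 1) * e (i0 + 1))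
             else if i0 + 1 = n then -(t ^ n * (x * e (n - m)))
             else -(x⁻¹ * e (i0 + 1 - n)))
          = -(x⁻¹ * ∑ i ∈ Finset.Ico 1 m, e i) := by
        rw [Finset.mul_sum, ← Finset.sum_neg_distrib]
        apply Finset.sum_nbij' (fun i0 => i0 + 1 - n) (fun i => n + i - 1)
        · intro a ha; simp only [Finset.mem_Ico] at ha ⊢; omega
        · intro a ha; simp only [Finset.mem_Ico] at ha ⊢; omega
        · intro a ha; simp only [Finset.mem_Ico] at ha; omega
        · intro a ha; simp only [Finset.mem_Ico] at ha; omega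
        · intro a ha
          simp only [Finset.mem_Ico] at ha
          rw [if_neg (show ¬ (a + 1 ≤ n - 1) from by omega),
            if_neg (show ¬ (a + 1 = n) from by omega)]
      rw [hsum0, Finset.range_eq_Ico,
        ← Finset.sum_Ico_consecutive _ (show 0 ≤ n - 1 from by omega)
          (show n - 1 ≤ m + n - 1 from by omega),
        ← Finset.sum_Ico_consecutive _ (show n - 1 ≤ n from by omega)
          (show n ≤ m + n - 1 from by omega),
        hsing, Finset.sum_singleton, P1, P3]
      rw [if_neg (show ¬ (n - 1 + 1 ≤ n - 1) from by omega),
        if_pos (show n - 1 + 1 = n from by omega)]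
      rw [hv, if_pos (show j.val + 1 ≤ n - 1 from by omega), hC]
      rw [hsum1, henm, hsum2, hem]
      linear_combination (-1 : K) * hKSI
        - ((∑ c ∈ Finset.Ico 1 m, t ^ (c * n) * x ^ (c + c * n / m)) + 1) * hxx
    · -- columns m+1..m+n-1
      have hAm : m < j.val + 1 := by omega
      rw [Finset.sum_eq_single_of_mem (⟨j.val - m, by omega⟩ : Fin (m + n - 1))
        (Finset.mem_univ _)]
      · rw [hM, hv, hv]
        simp only [Fin.val_mk]
        rcases Nat.lt_or_ge (j.val + 1) n with hB1 | hB
        · have hcl := hclaim1 (j.val - m + 1) (by omega) (by omega)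
          rw [show j.val - m + 1 + m = j.val + 1 from by omega] at hcl
          split_ifs <;>
            first
              | omega
              | linear_combination -x⁻¹ * hcl - e (j.val - m + 1) * hxx
        · rcases Nat.eq_or_lt_of_le hB with hB2 | hB3
          · split_ifs <;>
              first
                | omega
                | (rw [mul_one, show j.val - m + 1 = n - m from by omega,
                    ← mul_assoc, inv_mul_cancel₀ hx, one_mul])
          · have hcl := hclaim2 (j.val - m + 1) (by omega) (by omega)
            rw [show j.val - m + 1 + m - n = j.val + 1 - n from by omega] at hcl
            split_ifs <;>
              first
                | omega
                | linear_combination (-(x⁻¹ * t⁻¹ ^ n * x⁻¹)) * hcl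
                    - e (j.val - m + 1) * htt
                    - e (j.val - m + 1) * (t⁻¹ ^ n * t ^ n) * (x⁻¹ * x + 1) * hxx
      · intro b _ hbne
        have hb2 := b.isLt
        have hbv : b.val ≠ j.val - m := by
          intro h
          exact hbne (Fin.ext (by simpa using h))
        rw [hM]
        split_ifs <;> first | rw [mul_zero] | omega
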